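/- Let A be a Banach algebra and X a Banach A-bimodule. Suppose f, g : A → X satisfy ‖f(c²) − c·f(c) − g(c)·c‖ ≤ θ‖f(c)‖ for all c ∈ A (θ ≥ 0), f is additive, and the limit δ(c) := lim_{n→∞} 2^{−n} g(2^n c) exists for all c. Then f(c²) = c·f(c) + δ(c)·c for all c ∈ A. -/

import Mathlib

open Filter Topology MulOpposite

set_option linter.unusedSectionVars false
set_option linter.unusedVariables false

section

variable {A X : Type*}
  [NormedRing A] [NormedAlgebra ℂ A] [CompleteSpace A]
  [NormedAddCommGroup X] [NormedSpace ℂ X] [CompleteSpace X]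
  [Module A X] [Module Aᵐᵒᵖ X]
  [IsBoundedSMul A X] [IsBoundedSMul Aᵐᵒᵖ X]
  [SMulCommClass A Aᵐᵒᵖ X]
  [IsScalarTower ℂ A X] [IsScalarTower ℂ Aᵐᵒᵖ X]

/-- A Jordan derivation from `A` into the bimodule `X`: a `ℂ`-linear map `δ` with
`δ(a²) = a·δ(a) + δ(a)·a`. -/
def IsJordanDeriv (δ : A → X) : Prop :=
  (∀ x y : A, δ (x + y) = δ x + δ y) ∧ (∀ (μ : ℂ) (x : A), δ (μ • x) = μ • δ x) ∧
    ∀ a : A, δ (a ^ 2) = a • δ a + op a • δ a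

/-- A generalized Jordan derivation: a `ℂ`-linear map `d` such that there is a Jordan
derivation `δ` with `d(a²) = a·d(a) + δ(a)·a`. -/
def IsGenJordanDeriv (d : A → X) : Prop :=
  (∀ x y : A, d (x + y) = d x + d y) ∧ (∀ (μ : ℂ) (x : A), d (μ • x) = μ • d x) ∧
    ∃ δ : A → X, IsJordanDeriv δ ∧ ∀ a : A, d (a ^ 2) = a • d a + op a • δ a

theorem stmt (f g δ : A → X) (θ : ℝ) (hθ : 0 ≤ θ)
    (hf : ∀ c : A, ‖f (c ^ 2) - c • f c - op c • g c‖ ≤ θ * ‖f c‖)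
    (hadd : ∀ a b : A, f (a + b) = f a + f b)
    (hδ : ∀ c : A, Tendsto (fun n : ℕ => ((2 : ℂ) ^ n)⁻¹ • g ((2 : ℂ) ^ n • c)) atTop (𝓝 (δ c))) :
    ∀ c : A, f (c ^ 2) = c • f c + op c • δ c := by
  intro c
  -- f is additive, hence f 0 = 0 and f commutes with ℕ-smul, hence with 2^n • over ℂ
  have hf0 : f 0 = 0 := by
    have := hadd 0 0; simpa using this
  have hnat : ∀ (n : ℕ) (a : A), f (n • a) = n • f a := by
    intro n a
    induction n with
    | zero => simpa using hf0
    | succ k ih => rw [succ_nsmul, succ_nsmul, hadd, ih]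
  have hcast : ∀ n : ℕ, (2:ℂ)^n = ((2^n : ℕ) : ℂ) := by intro n; push_cast; ring
  have hpow : ∀ (n : ℕ) (a : A), f ((2:ℂ)^n • a) = (2:ℂ)^n • f a := by
    intro n a
    rw [hcast n, Nat.cast_smul_eq_nsmul, Nat.cast_smul_eq_nsmul]
    exact hnat _ _
  have hcommA : ∀ (n : ℕ) (a : A) (x : X), a • ((2:ℂ)^n • x) = (2:ℂ)^n • (a • x) := by
    intro n a x
    rw [hcast n, Nat.cast_smul_eq_nsmul, Nat.cast_smul_eq_nsmul, smul_comm]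
  have hcommB : ∀ (n : ℕ) (a : Aᵐᵒᵖ) (x : X), a • ((2:ℂ)^n • x) = (2:ℂ)^n • (a • x) := by
    intro n a x
    rw [hcast n, Nat.cast_smul_eq_nsmul, Nat.cast_smul_eq_nsmul, smul_comm]
  set s : ℕ → X := fun n => ((2:ℂ)^n)⁻¹ • g ((2:ℂ)^n • c) with hs
  set E : ℕ → X := fun n => f (c^2) - c • f c - op c • s n with hE
  have ht0 : ∀ n : ℕ, (2:ℂ)^n ≠ 0 := fun n => pow_ne_zero n two_ne_zero
  have hg : ∀ n : ℕ, g ((2:ℂ)^n • c) = (2:ℂ)^n • s n := by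
    intro n
    rw [hs]
    simp only [smul_smul, mul_inv_cancel₀ (ht0 n), one_smul]
  have key : ∀ n : ℕ, ‖E n‖ ≤ θ * ((2:ℝ)⁻¹^n * ‖f c‖) := by
    intro n
    have h := hf ((2:ℂ)^n • c)
    have e1 : ((2:ℂ)^n • c)^2 = (2:ℂ)^(2*n) • c^2 := by
      rw [smul_pow, ← pow_mul, mul_comm n 2]
    have e2 : f (((2:ℂ)^n • c)^2) = (2:ℂ)^(2*n) • f (c^2) := by
      rw [e1, hpow]
    have e3 : ((2:ℂ)^n • c) • f ((2:ℂ)^n • c) = (2:ℂ)^(2*n) • (c • f c) := by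
      rw [hpow, hcommA, smul_assoc, smul_smul, ← pow_add, two_mul]
    have e4 : op ((2:ℂ)^n • c) • g ((2:ℂ)^n • c) = (2:ℂ)^(2*n) • (op c • s n) := by
      rw [hg, show op ((2:ℂ)^n • c) = (2:ℂ)^n • op c from rfl, smul_assoc,
        hcommB, smul_smul, ← pow_add, two_mul]
    rw [e2, e3, e4, hpow, ← smul_sub, ← smul_sub, norm_smul, norm_smul] at h
    have hE' : ‖(2:ℂ)^(2*n)‖ * ‖E n‖ ≤ θ * (‖(2:ℂ)^n‖ * ‖f c‖) := h
    have hnorm : ‖(2:ℂ)^n‖ = (2:ℝ)^n := by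
      rw [norm_pow]; norm_num
    have hnorm2 : ‖(2:ℂ)^(2*n)‖ = (2:ℝ)^(2*n) := by
      rw [norm_pow]; norm_num
    rw [hnorm, hnorm2] at hE'
    have h2n : (0:ℝ) < (2:ℝ)^(2*n) := by positivity
    rw [inv_pow]
    rw [← mul_le_mul_iff_right₀ h2n]
    calc (2:ℝ)^(2*n) * (θ * (((2:ℝ)^n)⁻¹ * ‖f c‖))
        = θ * ((2:ℝ)^n * ‖f c‖) := by
          rw [two_mul, pow_add]; field_simp
      _ ≥ (2:ℝ)^(2*n) * ‖E n‖ := hE'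
  have hbound : Tendsto (fun n => θ * ((2:ℝ)⁻¹^n * ‖f c‖)) atTop (𝓝 0) := by
    have h1 : Tendsto (fun n : ℕ => (2:ℝ)⁻¹^n) atTop (𝓝 0) := by
      apply tendsto_pow_atTop_nhds_zero_of_lt_one <;> norm_num
    have := (h1.mul_const ‖f c‖).const_mul θ
    simpa using this
  have hE0 : Tendsto E atTop (𝓝 0) := by
    rw [tendsto_zero_iff_norm_tendsto_zero]
    exact squeeze_zero (fun n => norm_nonneg _) key hbound
  have hlim1 : Tendsto (fun n => op c • s n) atTop (𝓝 (f (c^2) - c • f c)) := by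
    have : Tendsto (fun n => (f (c^2) - c • f c) - E n) atTop (𝓝 ((f (c^2) - c • f c) - 0)) :=
      tendsto_const_nhds.sub hE0
    simp only [hE, sub_sub_cancel, sub_zero] at this
    exact this
  have hlim2 : Tendsto (fun n => op c • s n) atTop (𝓝 (op c • δ c)) :=
    (hδ c).const_smul (op c)
  have := tendsto_nhds_unique hlim1 hlim2
  rw [← this]; abel
end
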